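/- For permutations σ, τ of {1,...,r}, the graph G_{r,s}(σ,τ) (two copies of the graph P_{r,s}, joined at both ends by antimatchings given by σ and τ respectively) is r-colorable if and only if σ = τ. -/
import Mathlib


/-- The graph `G_{r,s}(σ,τ)`: two copies (indexed by a `Bool`) of the graph `P_{r,s}`
on vertex set `Fin r × Fin s` (a sequence of `s` cliques of size `r`, consecutive cliques
joined by an antimatching: `(i,p)` is adjacent to `(j,q)` iff `i ≠ j` and `|p - q| ≤ 1`),
together with an antimatching between the two first cliques given by `σ`
(`(i,0)` of the first copy is adjacent to `(j,0)` of the second copy iff `j ≠ σ i`)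
and an antimatching between the two last cliques given by `τ`
(`(i,s-1)` of the first copy is adjacent to `(j,s-1)` of the second copy iff `j ≠ τ i`). -/
def Grst (r s : ℕ) (σ τ : Equiv.Perm (Fin r)) : SimpleGraph (Bool × Fin r × Fin s) :=
  SimpleGraph.fromRel (fun x y =>
    (x.1 = y.1 ∧ x.2.1 ≠ y.2.1 ∧
      (x.2.2 = y.2.2 ∨ (x.2.2 : ℕ) + 1 = (y.2.2 : ℕ)))
    ∨ (x.1 = false ∧ y.1 = true ∧ x.2.2 = y.2.2 ∧
      (((x.2.2 : ℕ) = 0 ∧ y.2.1 ≠ σ x.2.1) ∨ ((x.2.2 : ℕ) = s - 1 ∧ y.2.1 ≠ τ x.2.1))))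

/-- For `r, s ≥ 2` and permutations `σ, τ` of `{1,…,r}`, the graph `G_{r,s}(σ,τ)` is
`r`-colorable if and only if `σ = τ`. -/
theorem stmt_3 (r s : ℕ) (hr : 2 ≤ r) (hs : 2 ≤ s) (σ τ : Equiv.Perm (Fin r)) :
    (Grst r s σ τ).Colorable r ↔ σ = τ := by
  have hs0 : 0 < s := by omega
  constructor
  · rintro ⟨C⟩
    have adj_same : ∀ (b : Bool) (i j : Fin r) (p q : Fin s), i ≠ j →
        (p = q ∨ (p : ℕ) + 1 = (q : ℕ)) → (Grst r s σ τ).Adj (b, i, p) (b, j, q) := by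
      intro b i j p q hij hpq
      refine (SimpleGraph.fromRel_adj _ _ _).mpr ⟨?_, Or.inl (Or.inl ⟨rfl, hij, hpq⟩)⟩
      exact fun h => hij (congrArg (fun z => z.2.1) h)
    have adj_cross0 : ∀ i j : Fin r, j ≠ σ i →
        (Grst r s σ τ).Adj (false, i, ⟨0, hs0⟩) (true, j, ⟨0, hs0⟩) := by
      intro i j hj
      refine (SimpleGraph.fromRel_adj _ _ _).mpr ⟨by simp, Or.inl (Or.inr ?_)⟩
      exact ⟨rfl, rfl, rfl, Or.inl ⟨rfl, hj⟩⟩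
    have adj_cross1 : ∀ i j : Fin r, j ≠ τ i →
        (Grst r s σ τ).Adj (false, i, ⟨s - 1, by omega⟩) (true, j, ⟨s - 1, by omega⟩) := by
      intro i j hj
      refine (SimpleGraph.fromRel_adj _ _ _).mpr ⟨by simp, Or.inl (Or.inr ?_)⟩
      exact ⟨rfl, rfl, rfl, Or.inr ⟨rfl, hj⟩⟩
    have hinj : ∀ b p, Function.Injective (fun i => C (b, i, p)) := by
      intro b p i j hij
      by_contra hne
      exact C.valid (adj_same b i j p p hne (Or.inl rfl)) hij
    have hsurj : ∀ b p, Function.Surjective (fun i => C (b, i, p)) :=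
      fun b p => Finite.surjective_of_injective (hinj b p)
    have step : ∀ (b : Bool) (i : Fin r) (k : ℕ) (h : k + 1 < s),
        C (b, i, ⟨k + 1, h⟩) = C (b, i, ⟨k, by omega⟩) := by
      intro b i k h
      obtain ⟨j, hj⟩ := hsurj b ⟨k, by omega⟩ (C (b, i, ⟨k + 1, h⟩))
      rcases eq_or_ne j i with rfl | hne
      · exact hj.symm
      · exact absurd hj (C.valid (adj_same b j i ⟨k, by omega⟩ ⟨k + 1, h⟩ hne (Or.inr rfl)))
    have const : ∀ (b : Bool) (i : Fin r) (k : ℕ) (hk : k < s),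
        C (b, i, ⟨k, hk⟩) = C (b, i, ⟨0, hs0⟩) := by
      intro b i k
      induction k with
      | zero => intro hk; rfl
      | succ n ih => intro hk; rw [step b i n hk, ih (by omega)]
    have cross0 : ∀ i : Fin r, C (false, i, ⟨0, hs0⟩) = C (true, σ i, ⟨0, hs0⟩) := by
      intro i
      obtain ⟨j, hj⟩ := hsurj true ⟨0, hs0⟩ (C (false, i, ⟨0, hs0⟩))
      rcases eq_or_ne j (σ i) with rfl | hne
      · exact hj.symm
      · exact absurd hj.symm (C.valid (adj_cross0 i j hne))
    have cross1 : ∀ i : Fin r,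
        C (false, i, ⟨s - 1, by omega⟩) = C (true, τ i, ⟨s - 1, by omega⟩) := by
      intro i
      obtain ⟨j, hj⟩ := hsurj true ⟨s - 1, by omega⟩ (C (false, i, ⟨s - 1, by omega⟩))
      rcases eq_or_ne j (τ i) with rfl | hne
      · exact hj.symm
      · exact absurd hj.symm (C.valid (adj_cross1 i j hne))
    refine Equiv.ext fun i => ?_
    have h0 := cross0 i
    have h1 := cross1 i
    rw [const false i (s-1) (by omega), const true (τ i) (s-1) (by omega)] at h1
    exact hinj true ⟨0, hs0⟩ (h0.symm.trans h1)
  · rintro rfl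
    refine ⟨SimpleGraph.Coloring.mk (fun x => if x.1 then σ⁻¹ x.2.1 else x.2.1) ?_⟩
    rintro ⟨b, i, p⟩ ⟨b', j, q⟩ hadj
    rw [Grst, SimpleGraph.fromRel_adj] at hadj
    obtain ⟨hne, h | h⟩ := hadj
    · rcases h with ⟨hb, hij, -⟩ | ⟨hb, hb', -, h⟩
      · subst hb
        cases b <;> simp_all
      · subst hb; subst hb'
        have : j ≠ σ i := by rcases h with ⟨-, h⟩ | ⟨-, h⟩ <;> exact h
        simp only [if_true, if_false, Bool.false_eq_true]
        intro hc
        exact this (by rw [hc]; simp)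
    · rcases h with ⟨hb, hij, -⟩ | ⟨hb, hb', -, h⟩
      · subst hb
        cases b' <;> simp_all [Ne.symm]
      · subst hb; subst hb'
        have : i ≠ σ j := by rcases h with ⟨-, h⟩ | ⟨-, h⟩ <;> exact h
        simp only [if_true, if_false, Bool.false_eq_true]
        intro hc
        exact this (by rw [← hc]; simp)
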